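/- arXiv:1201.4477 — 7 statements merged into one kernel-verified Lean document; each statement's English description precedes it below -/
import Mathlib

section
/- Let λ ≥ 1 be an integer and M = 2^λ. For all natural numbers k₁, k₂, l₁, l₂ with 1 ≤ k₁, k₂, l₁, l₂ ≤ M/2, k₁ ≠ k₂ and l₁ ≠ l₂, the equality sin(k₁π/M)·sin(l₂π/M) = sin(l₁π/M)·sin(k₂π/M) holds if and only if k₁ = l₁ and k₂ = l₂. (Since sin(kπ/M) > 0 for 1 ≤ k ≤ M/2, this is equivalent to: sin(k₁π/M)/sin(k₂π/M) = sin(l₁π/M)/sin(l₂π/M) iff k₁ = l₁ and k₂ = l₂.) -/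
open Complex Polynomial Finset in
lemma zeta_indep (lam M : ℕ) (hM : M = 2 ^ lam) (c : ℕ → ℤ)
    (h : ∑ j ∈ Finset.range M, (c j : ℂ) * Complex.exp (Real.pi * Complex.I / M) ^ j = 0) :
    ∀ j < M, c j = 0 := by
  have hM0 : (M : ℂ) ≠ 0 := by
    have : 0 < M := by rw [hM]; positivity
    exact_mod_cast this.ne'
  set ζ : ℂ := Complex.exp (Real.pi * Complex.I / M) with hζdef
  have hζ : IsPrimitiveRoot ζ (2 * M) := by
    have h2M : (2 * M : ℕ) ≠ 0 := by rw [hM]; positivity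
    have := Complex.isPrimitiveRoot_exp (2 * M) h2M
    convert this using 2
    push_cast
    field_simp
  have hmin : minpoly ℚ ζ = cyclotomic (2 * M) ℚ :=
    (cyclotomic_eq_minpoly_rat hζ (by rw [hM]; positivity)).symm
  have htot : (2 * M).totient = M := by
    rw [hM, ← pow_succ']
    rw [Nat.totient_prime_pow Nat.prime_two (Nat.succ_pos lam)]
    simp [hM]
  set P : ℚ[X] := ∑ j ∈ Finset.range M, Polynomial.C ((c j : ℚ)) * Polynomial.X ^ j with hP
  have hcoeff : ∀ i, P.coeff i = if i ∈ Finset.range M then ((c i : ℚ)) else 0 := by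
    intro i
    rw [hP, finset_sum_coeff]
    simp only [coeff_C_mul, coeff_X_pow]
    rw [Finset.sum_congr rfl (fun j _ => by rw [mul_ite, mul_one, mul_zero, eq_comm])]
    exact Finset.sum_ite_eq (Finset.range M) i _
  have hroot : Polynomial.aeval ζ P = 0 := by
    rw [hP, map_sum]
    simp only [map_mul, map_pow, aeval_C, aeval_X]
    rw [← h]
    refine Finset.sum_congr rfl fun j _ => ?_
    norm_num
  have hP0 : P = 0 := by
    by_contra hne
    have hdvd := minpoly.dvd ℚ ζ hroot
    have hdeg := Polynomial.natDegree_le_of_dvd hdvd hne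
    rw [hmin, natDegree_cyclotomic, htot] at hdeg
    have hlc := Polynomial.leadingCoeff_ne_zero.mpr hne
    rw [Polynomial.leadingCoeff, hcoeff] at hlc
    simp only [Finset.mem_range] at hlc
    rw [if_neg (by omega)] at hlc
    exact hlc rfl
  intro j hj
  have := hcoeff j
  rw [hP0] at this
  simp only [Polynomial.coeff_zero, Finset.mem_range, hj, if_true] at this
  exact_mod_cast this.symm

open Complex Finset in
lemma cos_indep (lam M m : ℕ) (hlam : 1 ≤ lam) (hM : M = 2 ^ lam) (hm : M = 2 * m)
    (c : ℕ → ℤ)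
    (h : ∑ j ∈ Finset.range (m + 1), (c j : ℝ) * Real.cos (j * Real.pi / M) = 0) :
    ∀ j < m, c j = 0 := by
  have hm1 : 1 ≤ m := by
    rcases Nat.exists_eq_add_of_le hlam with ⟨k, hk⟩
    subst hk
    have : 2 ^ (1 + k) = 2 * 2 ^ k := by rw [pow_add, pow_one]
    have h2 : 0 < 2 ^ k := Nat.pow_pos (by norm_num)
    omega
  have hM0 : (M : ℝ) ≠ 0 := by
    have : 0 < M := by omega
    exact_mod_cast this.ne'
  have hMC0 : (M : ℂ) ≠ 0 := by
    have : 0 < M := by omega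
    exact_mod_cast this.ne'
  -- kill the j = m coefficient
  set c' : ℕ → ℤ := fun j => if j = m then 0 else c j with hc'
  have hcosm : Real.cos ((m : ℝ) * Real.pi / M) = 0 := by
    have harg : (m : ℝ) * Real.pi / M = Real.pi / 2 := by
      rw [hm]; push_cast; field_simp
    rw [harg, Real.cos_pi_div_two]
  have h' : ∑ j ∈ Finset.range (m + 1), (c' j : ℝ) * Real.cos (j * Real.pi / M) = 0 := by
    rw [Finset.sum_range_succ, hcosm, mul_zero, add_zero]
    rw [Finset.sum_range_succ, hcosm, mul_zero, add_zero] at h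
    rw [← h]
    refine Finset.sum_congr rfl fun j hj => ?_
    simp only [Finset.mem_range] at hj
    rw [hc']
    simp only [if_neg (by omega : ¬ j = m)]
  -- complexify
  have hC : ∑ j ∈ Finset.range (m + 1), (c' j : ℂ) * Complex.cos (j * Real.pi / M) = 0 := by
    have := congrArg (Complex.ofReal) h'
    push_cast [Complex.ofReal_cos] at this
    convert this using 2 with j
  set ζ : ℂ := Complex.exp (Real.pi * Complex.I / M) with hζdef
  have hpow : ∀ k : ℕ, ζ ^ k = Complex.exp (k * (Real.pi * Complex.I / M)) :=
    fun k => (Complex.exp_nat_mul _ k).symm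
  have key : ∀ j ∈ Finset.range (m + 1),
      (c' j : ℂ) * Complex.cos (j * Real.pi / M) * (2 * ζ ^ m)
        = (c' j : ℂ) * (ζ ^ (m + j) + ζ ^ (m - j)) := by
    intro j hj
    simp only [Finset.mem_range] at hj
    have hj' : j ≤ m := by omega
    have htc := Complex.two_cos ((j : ℂ) * Real.pi / M)
    have e1 : ζ ^ (m + j) = Complex.exp ((j : ℂ) * Real.pi / M * I)
        * Complex.exp ((m : ℂ) * (Real.pi * Complex.I / M)) := by
      rw [hpow, ← Complex.exp_add]
      congr 1
      push_cast
      ring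
    have e2 : ζ ^ (m - j) = Complex.exp (-((j : ℂ) * Real.pi / M) * I)
        * Complex.exp ((m : ℂ) * (Real.pi * Complex.I / M)) := by
      rw [hpow, ← Complex.exp_add]
      congr 1
      rw [Nat.cast_sub hj']
      push_cast
      ring
    calc (c' j : ℂ) * Complex.cos (j * Real.pi / M) * (2 * ζ ^ m)
        = (c' j : ℂ) * ((2 * Complex.cos ((j : ℂ) * Real.pi / M))
            * Complex.exp ((m : ℂ) * (Real.pi * Complex.I / M))) := by
          rw [hpow]; push_cast; ring
      _ = (c' j : ℂ) * (ζ ^ (m + j) + ζ ^ (m - j)) := by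
          rw [htc, e1, e2]; ring
  have hsum : ∑ j ∈ Finset.range (m + 1), (c' j : ℂ) * (ζ ^ (m + j) + ζ ^ (m - j)) = 0 := by
    rw [← Finset.sum_congr rfl key, ← Finset.sum_mul, hC, zero_mul]
  -- coefficient function on range M
  set d : ℕ → ℤ := fun i => (if i ≤ m then c' (m - i) else 0) + (if m ≤ i then c' (i - m) else 0)
    with hd
  have hdsum : ∑ i ∈ Finset.range M, (d i : ℂ) * ζ ^ i = 0 := by
    have split : ∑ i ∈ Finset.range M, (d i : ℂ) * ζ ^ i
        = (∑ i ∈ Finset.range M, (if i ≤ m then ((c' (m - i) : ℂ)) else 0) * ζ ^ i)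
          + ∑ i ∈ Finset.range M, (if m ≤ i then ((c' (i - m) : ℂ)) else 0) * ζ ^ i := by
      rw [← Finset.sum_add_distrib]
      refine Finset.sum_congr rfl fun i _ => ?_
      rw [hd]
      push_cast
      split_ifs <;> push_cast <;> ring
    have hT1 : (∑ i ∈ Finset.range M, (if i ≤ m then ((c' (m - i) : ℂ)) else 0) * ζ ^ i)
        = ∑ j ∈ Finset.range (m + 1), (c' j : ℂ) * ζ ^ (m - j) := by
      rw [← Finset.sum_subset (Finset.range_subset_range.mpr (by omega : m + 1 ≤ M))
        (fun x hx hnx => by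
          simp only [Finset.mem_range] at hx hnx
          rw [if_neg (by omega), zero_mul])]
      rw [← Finset.sum_range_reflect (fun j => (c' j : ℂ) * ζ ^ (m - j)) (m + 1)]
      refine Finset.sum_congr rfl fun i hi => ?_
      simp only [Finset.mem_range] at hi
      rw [if_pos (by omega : i ≤ m)]
      have h1 : m + 1 - 1 - i = m - i := by omega
      have h2 : m - (m - i) = i := by omega
      rw [h1, h2]
    have hT2 : (∑ i ∈ Finset.range M, (if m ≤ i then ((c' (i - m) : ℂ)) else 0) * ζ ^ i)
        = ∑ j ∈ Finset.range m, (c' j : ℂ) * ζ ^ (m + j) := by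
      calc ∑ i ∈ Finset.range M, (if m ≤ i then ((c' (i - m) : ℂ)) else 0) * ζ ^ i
          = ∑ i ∈ Finset.Ico 0 M, (if m ≤ i then ((c' (i - m) : ℂ)) else 0) * ζ ^ i := by
            rw [← Finset.range_eq_Ico]
        _ = (∑ i ∈ Finset.Ico 0 m, (if m ≤ i then ((c' (i - m) : ℂ)) else 0) * ζ ^ i)
            + ∑ i ∈ Finset.Ico m M, (if m ≤ i then ((c' (i - m) : ℂ)) else 0) * ζ ^ i :=
            (Finset.sum_Ico_consecutive _ (Nat.zero_le m) (by omega : m ≤ M)).symm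
        _ = ∑ i ∈ Finset.Ico m M, (if m ≤ i then ((c' (i - m) : ℂ)) else 0) * ζ ^ i := by
            rw [Finset.sum_eq_zero (fun i hi => by
              simp only [Finset.mem_Ico] at hi
              rw [if_neg (by omega), zero_mul]), zero_add]
        _ = ∑ i ∈ Finset.range (M - m), (if m ≤ m + i then ((c' (m + i - m) : ℂ)) else 0)
              * ζ ^ (m + i) := Finset.sum_Ico_eq_sum_range _ m M
        _ = ∑ j ∈ Finset.range m, (c' j : ℂ) * ζ ^ (m + j) := by
            rw [show M - m = m from by omega]
            refine Finset.sum_congr rfl fun i hi => ?_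
            rw [if_pos (by omega : m ≤ m + i), show m + i - m = i from by omega]
    rw [split, hT1, hT2]
    have hS1 : ∑ j ∈ Finset.range (m + 1), (c' j : ℂ) * ζ ^ (m + j)
        = ∑ j ∈ Finset.range m, (c' j : ℂ) * ζ ^ (m + j) := by
      rw [Finset.sum_range_succ, hc']
      simp
    rw [← hS1]
    rw [← hsum]
    rw [← Finset.sum_add_distrib]
    refine Finset.sum_congr rfl fun j _ => ?_
    ring
  have hzero := zeta_indep lam M hM d hdsum
  intro j hj
  rcases eq_or_ne j 0 with rfl | hjne
  · have h0 := hzero m (by omega)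
    simp only [hd] at h0
    simp only [le_refl, if_pos, Nat.sub_self] at h0
    rw [hc'] at h0
    simp only [if_neg (by omega : ¬ (0 : ℕ) = m)] at h0
    omega
  · have h0 := hzero (m - j) (by omega)
    simp only [hd] at h0
    rw [if_pos (by omega : m - j ≤ m), if_neg (by omega : ¬ m ≤ m - j)] at h0
    have : m - (m - j) = j := by omega
    rw [this] at h0
    rw [hc'] at h0
    simp only [if_neg (by omega : ¬ j = m)] at h0
    omega


section Endgame
variable (m a b p q dab dpq wA wP : ℕ)

lemma case_pp
    (ha : 1 ≤ a) (ha' : a ≤ m) (hb : 1 ≤ b) (hb' : b ≤ m)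
    (hp : 1 ≤ p) (hp' : p ≤ m) (hq : 1 ≤ q) (hq' : q ≤ m)
    (haq : a ≠ q) (hpb : p ≠ b)
    (hd : dab + b = a ∨ dab + a = b)
    (he : dpq + q = p ∨ dpq + p = q)
    (hw : wA = a + b) (hr : a + b ≤ m)
    (hw' : wP = p + q) (hr' : p + q ≤ m)
    (H : ∀ j < m, (if j = dab then (1:ℤ) else 0) - (if j = wA then 1 else 0)
      - (if j = dpq then 1 else 0) + (if j = wP then 1 else 0) = 0) :
    a = p ∧ b = q := by
  have o1 : dab = dpq ∧ dab ≠ wP ∧ dab ≠ wA := by have h1 := H dab (by omega); omega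
  by_cases hwp : wP < m
  · have h2 := H wP hwp
    omega
  · by_cases hwa : wA < m
    · have h3 := H wA hwa
      omega
    · omega

lemma case_pm
    (ha : 1 ≤ a) (ha' : a ≤ m) (hb : 1 ≤ b) (hb' : b ≤ m)
    (hp : 1 ≤ p) (hp' : p ≤ m) (hq : 1 ≤ q) (hq' : q ≤ m)
    (haq : a ≠ q) (hpb : p ≠ b)
    (hd : dab + b = a ∨ dab + a = b)
    (he : dpq + q = p ∨ dpq + p = q)
    (hw : wA = a + b) (hr : a + b ≤ m)
    (hw' : wP + (p + q) = 2 * m) (hr' : m < p + q)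
    (H : ∀ j < m, (if j = dab then (1:ℤ) else 0) - (if j = wA then 1 else 0)
      - (if j = dpq then 1 else 0) - (if j = wP then 1 else 0) = 0) :
    a = p ∧ b = q := by
  have o1 : dpq = dab ∧ dpq ≠ wA ∧ dpq ≠ wP := by have h1 := H dpq (by omega); omega
  have h2 := H wP (by omega)
  omega

lemma case_mp
    (ha : 1 ≤ a) (ha' : a ≤ m) (hb : 1 ≤ b) (hb' : b ≤ m)
    (hp : 1 ≤ p) (hp' : p ≤ m) (hq : 1 ≤ q) (hq' : q ≤ m)
    (haq : a ≠ q) (hpb : p ≠ b)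
    (hd : dab + b = a ∨ dab + a = b)
    (he : dpq + q = p ∨ dpq + p = q)
    (hw : wA + (a + b) = 2 * m) (hr : m < a + b)
    (hw' : wP = p + q) (hr' : p + q ≤ m)
    (H : ∀ j < m, (if j = dab then (1:ℤ) else 0) + (if j = wA then 1 else 0)
      - (if j = dpq then 1 else 0) + (if j = wP then 1 else 0) = 0) :
    a = p ∧ b = q := by
  have o1 : dab = dpq ∧ dab ≠ wA ∧ dab ≠ wP := by have h1 := H dab (by omega); omega
  have h2 := H wA (by omega)
  omega

lemma case_mm
    (ha : 1 ≤ a) (ha' : a ≤ m) (hb : 1 ≤ b) (hb' : b ≤ m)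
    (hp : 1 ≤ p) (hp' : p ≤ m) (hq : 1 ≤ q) (hq' : q ≤ m)
    (haq : a ≠ q) (hpb : p ≠ b)
    (hd : dab + b = a ∨ dab + a = b)
    (he : dpq + q = p ∨ dpq + p = q)
    (hw : wA + (a + b) = 2 * m) (hr : m < a + b)
    (hw' : wP + (p + q) = 2 * m) (hr' : m < p + q)
    (H : ∀ j < m, (if j = dab then (1:ℤ) else 0) + (if j = wA then 1 else 0)
      - (if j = dpq then 1 else 0) - (if j = wP then 1 else 0) = 0) :
    a = p ∧ b = q := by
  have o1 : dpq = dab ∨ dpq = wA := by have h1 := H dpq (by omega); omega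
  rcases o1 with o1 | o1
  · have o2 : wA = wP := by have h2 := H wA (by omega); omega
    omega
  · have o2 : dab = wP := by have h2 := H wP (by omega); omega
    omega

lemma endgame (σA σP : ℤ)
    (ha : 1 ≤ a) (ha' : a ≤ m) (hb : 1 ≤ b) (hb' : b ≤ m)
    (hp : 1 ≤ p) (hp' : p ≤ m) (hq : 1 ≤ q) (hq' : q ≤ m)
    (haq : a ≠ q) (hpb : p ≠ b)
    (hd : dab + b = a ∨ dab + a = b)
    (he : dpq + q = p ∨ dpq + p = q)
    (hA : (σA = 1 ∧ wA = a + b ∧ a + b ≤ m) ∨ (σA = -1 ∧ wA + (a + b) = 2 * m ∧ m < a + b))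
    (hP : (σP = 1 ∧ wP = p + q ∧ p + q ≤ m) ∨ (σP = -1 ∧ wP + (p + q) = 2 * m ∧ m < p + q))
    (H : ∀ j < m, (if j = dab then (1:ℤ) else 0) - σA * (if j = wA then 1 else 0)
      - (if j = dpq then 1 else 0) + σP * (if j = wP then 1 else 0) = 0) :
    a = p ∧ b = q := by
  rcases hA with ⟨hs, hw, hr⟩ | ⟨hs, hw, hr⟩ <;> rcases hP with ⟨hs', hw', hr'⟩ | ⟨hs', hw', hr'⟩ <;>
    subst hs hs'
  · exact case_pp m a b p q dab dpq wA wP ha ha' hb hb' hp hp' hq hq' haq hpb hd he hw hr hw' hr'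
      (fun j hj => by have := H j hj; omega)
  · exact case_pm m a b p q dab dpq wA wP ha ha' hb hb' hp hp' hq hq' haq hpb hd he hw hr hw' hr'
      (fun j hj => by have := H j hj; omega)
  · exact case_mp m a b p q dab dpq wA wP ha ha' hb hb' hp hp' hq hq' haq hpb hd he hw hr hw' hr'
      (fun j hj => by have := H j hj; omega)
  · exact case_mm m a b p q dab dpq wA wP ha ha' hb hb' hp hp' hq hq' haq hpb hd he hw hr hw' hr'
      (fun j hj => by have := H j hj; omega)

end Endgame

theorem sin_ratio_eq_iff (lam : ℕ) (hlam : 1 ≤ lam) (M : ℕ) (hM : M = 2 ^ lam)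
    (k₁ k₂ l₁ l₂ : ℕ)
    (hk₁ : 1 ≤ k₁) (hk₁' : k₁ ≤ M / 2)
    (hk₂ : 1 ≤ k₂) (hk₂' : k₂ ≤ M / 2)
    (hl₁ : 1 ≤ l₁) (hl₁' : l₁ ≤ M / 2)
    (hl₂ : 1 ≤ l₂) (hl₂' : l₂ ≤ M / 2)
    (hk : k₁ ≠ k₂) (hl : l₁ ≠ l₂) :
    Real.sin (k₁ * Real.pi / M) * Real.sin (l₂ * Real.pi / M) =
      Real.sin (l₁ * Real.pi / M) * Real.sin (k₂ * Real.pi / M) ↔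
    k₁ = l₁ ∧ k₂ = l₂ := by
  constructor
  · intro heq
    obtain ⟨k, rfl⟩ : ∃ k, lam = k + 1 := ⟨lam - 1, by omega⟩
    have hMm : M = 2 * 2 ^ k := by rw [hM, pow_succ]; ring
    set m : ℕ := 2 ^ k with hmdef
    have hm1 : 1 ≤ m := Nat.one_le_two_pow
    have hdiv : M / 2 = m := by omega
    rw [hdiv] at hk₁' hk₂' hl₁' hl₂'
    have hM0 : (M : ℝ) ≠ 0 := by
      have : 0 < M := by omega
      exact_mod_cast this.ne'
    have hMR : (M : ℝ) = 2 * m := by exact_mod_cast congrArg (Nat.cast : ℕ → ℝ) hMm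
    -- fold the sum-cosines
    have foldsum : ∀ x y : ℕ, 1 ≤ x → x ≤ m → 1 ≤ y → y ≤ m →
        ∃ (σ : ℤ) (w : ℕ), ((σ = 1 ∧ w = x + y ∧ x + y ≤ m) ∨
          (σ = -1 ∧ w + (x + y) = 2 * m ∧ m < x + y)) ∧
          Real.cos (((x + y : ℕ) : ℝ) * Real.pi / M) = (σ : ℝ) * Real.cos (w * Real.pi / M) := by
      intro x y hx hx' hy hy'
      by_cases hcmp : x + y ≤ m
      · exact ⟨1, x + y, Or.inl ⟨rfl, rfl, hcmp⟩, by push_cast; ring⟩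
      · refine ⟨-1, 2 * m - (x + y), Or.inr ⟨rfl, by omega, by omega⟩, ?_⟩
        have hc : ((2 * m - (x + y) : ℕ) : ℝ) = 2 * (m : ℝ) - ((x : ℝ) + y) := by
          push_cast [Nat.cast_sub (by omega : x + y ≤ 2 * m)]
          ring
        have harg : ((x + y : ℕ) : ℝ) * Real.pi / M
            = Real.pi - ((2 * m - (x + y) : ℕ) : ℝ) * Real.pi / M := by
          rw [hc, hMR]
          push_cast
          have hmR : (m : ℝ) ≠ 0 := by positivity
          field_simp
          ring
        rw [harg, Real.cos_pi_sub]
        push_cast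
        ring
    obtain ⟨σA, wA, hAspec, hAcos⟩ := foldsum k₁ l₂ hk₁ hk₁' hl₂ hl₂'
    obtain ⟨σP, wP, hPspec, hPcos⟩ := foldsum l₁ k₂ hl₁ hl₁' hk₂ hk₂'
    set dab : ℕ := (k₁ - l₂) + (l₂ - k₁) with hdabdef
    set dpq : ℕ := (l₁ - k₂) + (k₂ - l₁) with hdpqdef
    -- fold the difference-cosines
    have folddiff : ∀ x y d : ℕ, (d + y = x ∨ d + x = y) →
        Real.cos (((x : ℝ) - y) * Real.pi / M) = Real.cos (d * Real.pi / M) := by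
      intro x y d hd
      rcases hd with hd | hd
      · have : ((x : ℝ) - y) = (d : ℝ) := by
          have := congrArg (Nat.cast : ℕ → ℝ) hd
          push_cast at this
          linarith
        rw [this]
      · have h2 : ((x : ℝ) - y) = -(d : ℝ) := by
          have := congrArg (Nat.cast : ℕ → ℝ) hd
          push_cast at this
          linarith
        rw [h2, show (-(d : ℝ)) * Real.pi / M = -((d : ℝ) * Real.pi / M) by ring, Real.cos_neg]
    have hdd : dab + l₂ = k₁ ∨ dab + k₁ = l₂ := by omega
    have hee : dpq + k₂ = l₁ ∨ dpq + l₁ = k₂ := by omega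
    have hdcos := folddiff k₁ l₂ dab hdd
    have hecos := folddiff l₁ k₂ dpq hee
    -- master identity
    have P2S : ∀ x y : ℝ, Real.cos (x - y) - Real.cos (x + y) = 2 * (Real.sin x * Real.sin y) :=
      fun x y => by rw [Real.cos_sub, Real.cos_add]; ring
    have key : Real.cos (dab * Real.pi / M) - (σA : ℝ) * Real.cos (wA * Real.pi / M)
        - Real.cos (dpq * Real.pi / M) + (σP : ℝ) * Real.cos (wP * Real.pi / M) = 0 := by
      have e1 := P2S (k₁ * Real.pi / M) (l₂ * Real.pi / M)
      have e2 := P2S (l₁ * Real.pi / M) (k₂ * Real.pi / M)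
      rw [show (k₁ : ℝ) * Real.pi / M - (l₂ : ℝ) * Real.pi / M
            = ((k₁ : ℝ) - l₂) * Real.pi / M by ring,
          show (k₁ : ℝ) * Real.pi / M + (l₂ : ℝ) * Real.pi / M
            = ((k₁ + l₂ : ℕ) : ℝ) * Real.pi / M by push_cast; ring,
          hdcos, hAcos] at e1
      rw [show (l₁ : ℝ) * Real.pi / M - (k₂ : ℝ) * Real.pi / M
            = ((l₁ : ℝ) - k₂) * Real.pi / M by ring,
          show (l₁ : ℝ) * Real.pi / M + (k₂ : ℝ) * Real.pi / M
            = ((l₁ + k₂ : ℕ) : ℝ) * Real.pi / M by push_cast; ring,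
          hecos, hPcos] at e2
      linarith [e1, e2, heq]
    -- build coefficient function
    set c : ℕ → ℤ := fun j => (if j = dab then (1:ℤ) else 0) - σA * (if j = wA then 1 else 0)
      - (if j = dpq then 1 else 0) + σP * (if j = wP then 1 else 0) with hc
    have hwA : wA ≤ m := by rcases hAspec with ⟨_, h1, h2⟩ | ⟨_, h1, h2⟩ <;> omega
    have hwP : wP ≤ m := by rcases hPspec with ⟨_, h1, h2⟩ | ⟨_, h1, h2⟩ <;> omega
    have coll : ∀ w : ℕ, w ≤ m → (∑ j ∈ Finset.range (m+1),
        (if j = w then (1:ℝ) else 0) * Real.cos (j * Real.pi / M)) = Real.cos (w * Real.pi / M) := by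
      intro w hw
      rw [Finset.sum_congr rfl (fun j _ => by rw [ite_mul, one_mul, zero_mul])]
      rw [Finset.sum_ite_eq' (Finset.range (m+1)) w (fun j => Real.cos (j * Real.pi / M))]
      rw [if_pos (Finset.mem_range.mpr (by omega))]
    have hsum : ∑ j ∈ Finset.range (m + 1), (c j : ℝ) * Real.cos (j * Real.pi / M) = 0 := by
      have expand : ∀ j : ℕ, (c j : ℝ) * Real.cos (j * Real.pi / M) =
          (if j = dab then (1:ℝ) else 0) * Real.cos (j * Real.pi / M)
          - (σA : ℝ) * ((if j = wA then (1:ℝ) else 0) * Real.cos (j * Real.pi / M))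
          - (if j = dpq then (1:ℝ) else 0) * Real.cos (j * Real.pi / M)
          + (σP : ℝ) * ((if j = wP then (1:ℝ) else 0) * Real.cos (j * Real.pi / M)) := by
        intro j
        rw [hc]
        simp only [apply_ite (fun x : ℤ => (x : ℝ)), Int.cast_sub, Int.cast_add,
          Int.cast_mul, Int.cast_one, Int.cast_zero]
        ring
      rw [Finset.sum_congr rfl (fun j _ => expand j)]
      simp only [Finset.sum_sub_distrib, Finset.sum_add_distrib, ← Finset.mul_sum]
      rw [coll dab (by omega), coll wA hwA, coll dpq (by omega), coll wP hwP]
      linarith [key]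
    have H := cos_indep (k + 1) M m (by omega) hM hMm c hsum
    have conc := endgame m k₁ l₂ l₁ k₂ dab dpq wA wP σA σP hk₁ hk₁' hl₂ hl₂' hl₁ hl₁' hk₂ hk₂'
      hk hl hdd hee hAspec hPspec (fun j hj => by have := H j hj; rw [hc] at this; exact this)
    exact ⟨conc.1, conc.2.symm⟩
  · rintro ⟨h1, h2⟩
    rw [h1, h2]
end

section
/- Let λ ≥ 1 be an integer, M = 2^λ, and μ : ZMod M → ℂ the well-defined map μ(k) = exp(I·(2k+1)·π/M). For all k, k', l, l' ∈ ZMod M with k ≠ k', the equality μ(k) − μ(k') = μ(l) − μ(l') holds if and only if (k = l and k' = l') or (k = l' + M/2 and l = k' + M/2) in ZMod M. -/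
noncomputable def psk (M : ℕ) (k : ZMod M) : ℂ :=
  Complex.exp (Complex.I * (2 * (k.val : ℂ) + 1) * (Real.pi : ℂ) / (M : ℂ))

theorem psk_diff_eq_diff_iff (lam : ℕ) (hlam : 1 ≤ lam) (M : ℕ) (hM : M = 2 ^ lam)
    (k k' l l' : ZMod M) (hkk' : k ≠ k') :
    psk M k - psk M k' = psk M l - psk M l' ↔
      ((k = l ∧ k' = l') ∨
       (k = l' + ((2 ^ (lam - 1) : ℕ) : ZMod M) ∧ l = k' + ((2 ^ (lam - 1) : ℕ) : ZMod M))) := by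
  have hM0 : M ≠ 0 := by rw [hM]; positivity
  haveI : NeZero M := ⟨hM0⟩
  have hMC : (M : ℂ) ≠ 0 := Nat.cast_ne_zero.mpr hM0
  set ω : ℂ := Complex.exp (2 * Real.pi * Complex.I / M) with hω
  have hprim : IsPrimitiveRoot ω M := Complex.isPrimitiveRoot_exp M hM0
  set f : ZMod M → ℂ := fun x => ω ^ x.val with hf
  -- mod lemma
  have hmod : ∀ a : ℕ, ω ^ (a % M) = ω ^ a := by
    intro a
    conv_rhs => rw [← Nat.div_add_mod a M]
    rw [pow_add, pow_mul, hprim.pow_eq_one, one_pow, one_mul]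
  have hadd : ∀ x y : ZMod M, f (x + y) = f x * f y := by
    intro x y
    simp only [hf, ZMod.val_add, hmod, pow_add]
  have hinj : Function.Injective f := by
    intro x y hxy
    have := hprim.pow_inj (ZMod.val_lt x) (ZMod.val_lt y) hxy
    exact ZMod.val_injective M this
  have hne : ∀ x : ZMod M, f x ≠ 0 := by
    intro x
    exact pow_ne_zero _ (Complex.exp_ne_zero _)
  have hconj : ∀ x : ZMod M, (starRingEnd ℂ) (f x) = (f x)⁻¹ := by
    intro x
    have hωc : (starRingEnd ℂ) ω = ω⁻¹ := by
      rw [hω, ← Complex.exp_conj, ← Complex.exp_neg]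
      congr 1
      simp only [map_div₀, map_mul, Complex.conj_I, Complex.conj_ofReal, map_natCast,
        map_ofNat]
      ring
    simp only [hf, map_pow, hωc, inv_pow]
  set c : ZMod M := ((2 ^ (lam - 1) : ℕ) : ZMod M) with hc
  have hclt : 2 ^ (lam - 1) < M := by
    rw [hM]; exact Nat.pow_lt_pow_right one_lt_two (by omega)
  have hcval : c.val = 2 ^ (lam - 1) := ZMod.val_natCast_of_lt hclt
  have hMeq : (M : ℂ) = 2 * (2 ^ (lam - 1) : ℕ) := by
    rw [hM]
    push_cast
    rw [← pow_succ']
    congr 1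
    omega
  have hfc : f c = -1 := by
    rw [hf]
    simp only
    rw [hcval, ← Complex.exp_nat_mul, ← Complex.exp_pi_mul_I]
    congr 1
    rw [hMeq]
    have h2 : ((2 ^ (lam - 1) : ℕ) : ℂ) ≠ 0 := Nat.cast_ne_zero.mpr (by positivity)
    field_simp
  have hcc : c + c = 0 := by
    rw [hc, ← Nat.cast_add]
    have : 2 ^ (lam - 1) + 2 ^ (lam - 1) = M := by
      rw [hM]; rw [← two_mul, ← pow_succ']; congr 1; omega
    rw [this, ZMod.natCast_self]
  have hpsk : ∀ x : ZMod M, psk M x = Complex.exp (Real.pi * Complex.I / M) * f x := by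
    intro x
    rw [psk, hf]
    simp only
    rw [← Complex.exp_nat_mul, ← Complex.exp_add]
    congr 1
    field_simp
    ring
  have hred : (psk M k - psk M k' = psk M l - psk M l') ↔
      (f k - f k' = f l - f l') := by
    simp only [hpsk]
    rw [← mul_sub, ← mul_sub, mul_right_inj' (Complex.exp_ne_zero _)]
  rw [hred]
  constructor
  · intro heq
    have hs : f k + f l' = f l + f k' := by linear_combination heq
    by_cases h0 : f k + f l' = 0
    · right
      have hl' : f l' = -(f k) := by linear_combination h0
      have hl0 : f l = -(f k') := by linear_combination h0 - hs
      have e1 : l' = k + c := by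
        apply hinj
        rw [hadd, hfc, hl']
        ring
      have e2 : l = k' + c := by
        apply hinj
        rw [hadd, hfc, hl0]
        ring
      constructor
      · rw [e1, add_assoc, hcc, add_zero]
      · exact e2
    · left
      have hconjs : (f k)⁻¹ + (f l')⁻¹ = (f l)⁻¹ + (f k')⁻¹ := by
        have := congrArg (starRingEnd ℂ) hs
        rw [map_add, map_add, hconj, hconj, hconj, hconj] at this
        exact this
      have ha := mul_inv_cancel₀ (hne k)
      have hb := mul_inv_cancel₀ (hne l')
      have hu := mul_inv_cancel₀ (hne l)
      have hv := mul_inv_cancel₀ (hne k')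
      have hprod : f k * f l' = f l * f k' := by
        have h1 : (f k + f l') * (f l * f k') = (f l + f k') * (f k * f l') := by
          linear_combination (f k * f l' * f l * f k') * hconjs -
            (f l' * f l * f k') * ha - (f k * f l * f k') * hb +
            (f k * f l' * f k') * hu + (f k * f l' * f l) * hv
        have h2 : (f k + f l') * (f l * f k') = (f k + f l') * (f k * f l') := by
          rw [h1, ← hs]
        have := mul_left_cancel₀ h0 h2
        exact this.symm
      have hquad : (f k - f l) * (f k - f k') = 0 := by
        linear_combination f k * hs - hprod
      rcases mul_eq_zero.mp hquad with h | h
      · have hkl : k = l := hinj (by linear_combination h)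
        have hk'l' : k' = l' := by
          apply hinj
          have : f k = f l := by rw [hkl]
          linear_combination this - hs
        exact ⟨hkl, hk'l'⟩
      · exact absurd (hinj (by linear_combination h)) hkk'
  · rintro (⟨rfl, rfl⟩ | ⟨hk, hl⟩)
    · rfl
    · rw [hk, hl, hadd, hadd, hfc]
      ring
end

section
/- Let λ ≥ 1 be an integer, M = 2^λ, and μ : ZMod M → ℂ the well-defined map μ(k) = exp(I·(2k+1)·π/M). For all k, k', l, l' ∈ ZMod M with k ≠ k', the equality μ(k) − μ(k') = −(μ(l) − μ(l')) holds if and only if (k = l' and l = k') or (k = l + M/2 and k' = l' + M/2) in ZMod M. -/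
lemma psk_eq_exp (M : ℕ) (k : ZMod M) :
    psk M k = Complex.exp (((2 * k.val + 1) * Real.pi / M : ℝ) * Complex.I) := by
  unfold psk; congr 1; push_cast; ring

lemma psk_abs (M : ℕ) (k : ZMod M) : ‖psk M k‖ = 1 := by
  rw [psk_eq_exp]; exact Complex.norm_exp_ofReal_mul_I _

lemma psk_ne_zero (M : ℕ) (k : ZMod M) : psk M k ≠ 0 := Complex.exp_ne_zero _

lemma psk_natCast (M : ℕ) (hM : M ≠ 0) (n : ℕ) :
    psk M ((n : ZMod M)) = Complex.exp (Complex.I * (2 * n + 1) * Real.pi / M) := by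
  unfold psk
  rw [ZMod.val_natCast]
  rw [Complex.exp_eq_exp_iff_exists_int]
  refine ⟨-((n / M : ℕ) : ℤ), ?_⟩
  have hc : ((-((n / M : ℕ) : ℤ) : ℤ) : ℂ) = -((n / M : ℕ) : ℂ) := by rw [Int.cast_neg, Int.cast_natCast]
  rw [hc]
  have key : (n : ℂ) = M * ((n / M : ℕ) : ℂ) + ((n % M : ℕ) : ℂ) := by
    exact_mod_cast (Nat.div_add_mod n M).symm
  have hM' : (M : ℂ) ≠ 0 := by exact_mod_cast hM
  field_simp
  linear_combination (-2) * key

lemma psk_inj (M : ℕ) (hM : M ≠ 0) {a b : ZMod M} (h : psk M a = psk M b) : a = b := by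
  unfold psk at h
  rw [Complex.exp_eq_exp_iff_exists_int] at h
  obtain ⟨n, hn⟩ := h
  have hM' : (M : ℂ) ≠ 0 := by exact_mod_cast hM
  have hπ : (Real.pi : ℂ) ≠ 0 := by exact_mod_cast Real.pi_ne_zero
  have h2π : (2 * Real.pi : ℂ) ≠ 0 := by
    simp [Real.pi_ne_zero]
  field_simp at hn
  have h2' : (2 * Real.pi : ℂ) * (a.val : ℂ) = (2 * Real.pi : ℂ) * ((b.val : ℂ) + n * M) := by
    linear_combination (Real.pi : ℂ) * hn
  have h2 : (a.val : ℂ) = (b.val : ℂ) + n * M := mul_left_cancel₀ h2π h2'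
  have h3 : (a.val : ℤ) = b.val + n * M := by exact_mod_cast h2
  haveI : NeZero M := ⟨hM⟩
  have h4 : ((a.val : ℤ) : ZMod M) = ((b.val + n * M : ℤ) : ZMod M) := by rw [h3]
  push_cast at h4
  simpa [ZMod.natCast_self, ZMod.natCast_val, ZMod.intCast_cast] using h4

lemma psk_neg (lam M : ℕ) (hlam : 1 ≤ lam) (hM : M = 2 ^ lam) (a : ZMod M) :
    psk M (a + ((2 ^ (lam - 1) : ℕ) : ZMod M)) = -psk M a := by
  have hM0 : M ≠ 0 := by rw [hM]; exact pow_ne_zero _ two_ne_zero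
  haveI : NeZero M := ⟨hM0⟩
  have h2c : 2 ^ (lam - 1) + 2 ^ (lam - 1) = M := by
    rw [hM]; rw [← two_mul, ← pow_succ']; congr 1; omega
  have ha : a = ((a.val : ℕ) : ZMod M) := by
    rw [ZMod.natCast_val, ZMod.cast_id]
  have key : a + ((2 ^ (lam - 1) : ℕ) : ZMod M) = (((a.val + 2 ^ (lam - 1) : ℕ)) : ZMod M) := by
    push_cast
    rw [← ha]
  rw [key, psk_natCast M hM0, ha, psk_natCast M hM0]
  rw [← neg_one_mul, ← Complex.exp_pi_mul_I, ← Complex.exp_add]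
  congr 1
  have hM' : (M : ℂ) ≠ 0 := by exact_mod_cast hM0
  have h2c' : (2:ℂ) ^ (lam - 1) + (2:ℂ) ^ (lam - 1) = (M : ℂ) := by
    exact_mod_cast h2c
  field_simp
  rw [ZMod.natCast_zmod_val]; push_cast; linear_combination h2c'

theorem psk_diff_eq_neg_diff_iff (lam : ℕ) (hlam : 1 ≤ lam) (M : ℕ) (hM : M = 2 ^ lam)
    (k k' l l' : ZMod M) (hkk' : k ≠ k') :
    psk M k - psk M k' = -(psk M l - psk M l') ↔
      ((k = l' ∧ l = k') ∨
       (k = l + ((2 ^ (lam - 1) : ℕ) : ZMod M) ∧ k' = l' + ((2 ^ (lam - 1) : ℕ) : ZMod M))) := by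
  have hM0 : M ≠ 0 := by rw [hM]; exact pow_ne_zero _ two_ne_zero
  set c : ZMod M := ((2 ^ (lam - 1) : ℕ) : ZMod M) with hc
  have hcc : c + c = 0 := by
    have h2c : 2 ^ (lam - 1) + 2 ^ (lam - 1) = M := by
      rw [hM, ← two_mul, ← pow_succ']; congr 1; omega
    rw [hc, ← Nat.cast_add, h2c, ZMod.natCast_self]
  have hneg : ∀ a : ZMod M, psk M (a + c) = -psk M a := fun a => psk_neg lam M hlam hM a
  constructor
  · intro h
    have hsum : psk M k + psk M l = psk M k' + psk M l' := by linear_combination h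
    by_cases h0 : psk M k + psk M l = 0
    · right
      have h0' : psk M k' + psk M l' = 0 := by rw [← hsum]; exact h0
      have e1 : psk M l = psk M (k + c) := by rw [hneg]; linear_combination h0
      have e2 : psk M l' = psk M (k' + c) := by rw [hneg]; linear_combination h0'
      have f1 := psk_inj M hM0 e1
      have f2 := psk_inj M hM0 e2
      constructor
      · rw [f1, add_assoc, hcc, add_zero]
      · rw [f2, add_assoc, hcc, add_zero]
    · left
      have hnrm : ∀ x : ZMod M, ‖psk M x‖ = 1 := fun x => by
        rw [psk_abs]
      have hconj : (psk M k)⁻¹ + (psk M l)⁻¹ = (psk M k')⁻¹ + (psk M l')⁻¹ := by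
        rw [Complex.inv_eq_conj (hnrm k), Complex.inv_eq_conj (hnrm l),
          Complex.inv_eq_conj (hnrm k'), Complex.inv_eq_conj (hnrm l'),
          ← map_add, ← map_add, hsum]
      have hk := psk_ne_zero M k
      have hl := psk_ne_zero M l
      have hk' := psk_ne_zero M k'
      have hl' := psk_ne_zero M l'
      have hprod : psk M k * psk M l = psk M k' * psk M l' := by
        field_simp at hconj
        have h1 : (psk M k + psk M l) * (psk M k' * psk M l') =
            (psk M k' + psk M l') * (psk M k * psk M l) := by linear_combination hconj
        rw [← hsum] at h1
        exact (mul_left_cancel₀ h0 h1).symm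
      have hfac : (psk M k - psk M k') * (psk M k - psk M l') = 0 := by
        linear_combination psk M k * hsum - hprod
      rcases mul_eq_zero.mp hfac with hd | hd
      · exact absurd (psk_inj M hM0 (sub_eq_zero.mp hd)) hkk'
      · have hAD : psk M k = psk M l' := sub_eq_zero.mp hd
        have hBC : psk M l = psk M k' := by linear_combination hsum - hAD
        exact ⟨psk_inj M hM0 hAD, psk_inj M hM0 hBC⟩
  · rintro (⟨h1, h2⟩ | ⟨h1, h2⟩)
    · rw [h1, h2]; ring
    · rw [h1, h2, hneg l, hneg l']; ring
end

section
/- Let λ ≥ 1 be an integer, M = 2^λ, and n ≥ 1. Let Δx_A, Δx_B : Fin n → ℂ be vectors all of whose entries lie in the difference constellation ΔS of the M-PSK signal set and such that for every i, Δx_A i = Δx_B i or Δx_A i = −Δx_B i. Define the bit-wise XOR map f : (Fin n → ZMod M) → (Fin n → ZMod M) → (Fin n → ZMod M) by f a b = fun i => (((a i).val ^^^ (b i).val : ℕ) : ZMod M) (bitwise XOR of the representatives, which is again < M). Then f removes the singular fade subspace [span(Δx_A, Δx_B)]^⊥. -/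
/-- `f` removes the singular fade subspace `[span(ΔxA, ΔxB)]^⊥`: whenever the
differences of the transmitted PSK points are a common complex multiple of
`(ΔxA, ΔxB)`, the two pairs are mapped to the same value. -/
def Removes {M : ℕ} {ιA ιB T : Type*} (ΔxA : ιA → ℂ) (ΔxB : ιB → ℂ)
    (f : (ιA → ZMod M) → (ιB → ZMod M) → T) : Prop :=
  ∀ a a' : ιA → ZMod M, ∀ b b' : ιB → ZMod M,
    (∃ c : ℂ, (∀ i, psk M (a i) - psk M (a' i) = c * ΔxA i) ∧
              (∀ j, psk M (b j) - psk M (b' j) = c * ΔxB j)) →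
    f a b = f a' b'

/-- `f` satisfies the exclusive law. -/
def ExclusiveLaw {M : ℕ} {ιA ιB T : Type*}
    (f : (ιA → ZMod M) → (ιB → ZMod M) → T) : Prop :=
  (∀ a a' b, a ≠ a' → f a b ≠ f a' b) ∧ (∀ a b b', b ≠ b' → f a b ≠ f a b')

/-- The `M`-PSK signal set `{exp(I·(2k+1)·π/M) : 0 ≤ k < M}`. -/
def pskSet (M : ℕ) : Set ℂ :=
  {z | ∃ k : ℕ, k < M ∧ z = Complex.exp (Complex.I * (2 * (k : ℂ) + 1) * (Real.pi : ℂ) / (M : ℂ))}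

/-- The difference constellation `ΔS = {s - s' : s, s' ∈ S}`. -/
def diffSet (M : ℕ) : Set ℂ := {z | ∃ s ∈ pskSet M, ∃ s' ∈ pskSet M, z = s - s'}

/-! ### Auxiliary lemmas -/

/-- Adding a high power of two is XOR. -/
lemma natAux {i v : ℕ} (hv : v < 2 ^ i) : v + 2 ^ i = v ^^^ 2 ^ i := by
  apply Nat.eq_of_testBit_eq
  intro j
  rcases lt_trichotomy j i with h | rfl | h
  · rw [Nat.add_comm, Nat.testBit_two_pow_add_gt h, Nat.testBit_xor,
      Nat.testBit_two_pow_of_ne (by omega), Bool.xor_false]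
  · rw [Nat.add_comm, Nat.testBit_two_pow_add_eq, Nat.testBit_xor,
      Nat.testBit_two_pow_self, Nat.testBit_lt_two_pow hv]
    rfl
  · have h2 : (2:ℕ) ^ i < 2 ^ j := Nat.pow_lt_pow_right (by norm_num) h
    have h1 : v + 2 ^ i < 2 ^ j := by
      have : (2:ℕ) ^ i + 2 ^ i ≤ 2 ^ j := by
        rw [← two_mul, ← pow_succ']
        exact Nat.pow_le_pow_right (by norm_num) h
      omega
    rw [Nat.testBit_lt_two_pow h1, Nat.testBit_xor,
      Nat.testBit_lt_two_pow (by omega), Nat.testBit_two_pow_of_ne (by omega)]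
    rfl

lemma natMod {lam v : ℕ} (hlam : 1 ≤ lam) (hv : v < 2 ^ lam) :
    (v + 2 ^ (lam - 1)) % 2 ^ lam = v ^^^ 2 ^ (lam - 1) := by
  have hMe : 2 ^ lam = 2 ^ (lam - 1) * 2 := by
    rw [← pow_succ]; congr 1; omega
  by_cases h : v < 2 ^ (lam - 1)
  · rw [Nat.mod_eq_of_lt (by omega), natAux h]
  · obtain ⟨w, rfl⟩ : ∃ w, v = w + 2 ^ (lam - 1) := ⟨v - 2 ^ (lam - 1), by omega⟩
    have hw : w < 2 ^ (lam - 1) := by omega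
    have hmod : (w + 2 ^ (lam - 1) + 2 ^ (lam - 1)) % 2 ^ lam = w := by
      have : w + 2 ^ (lam - 1) + 2 ^ (lam - 1) = w + 2 ^ lam := by omega
      rw [this, Nat.add_mod_right]
      exact Nat.mod_eq_of_lt (by omega)
    rw [hmod, natAux hw, Nat.xor_assoc, Nat.xor_self, Nat.xor_zero]

/-- Two pairs of unit complex numbers with equal sums are equal up to swap,
unless both sums vanish. -/
lemma unit_sum {x y u v : ℂ} (hx : x * (starRingEnd ℂ) x = 1)
    (hy : y * (starRingEnd ℂ) y = 1) (hu : u * (starRingEnd ℂ) u = 1)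
    (hv : v * (starRingEnd ℂ) v = 1) (h : x + y = u + v) :
    (x = u ∧ y = v) ∨ (x = v ∧ y = u) ∨ (x + y = 0 ∧ u + v = 0) := by
  have hx0 : x ≠ 0 := fun h0 => by simp [h0] at hx
  have hy0 : y ≠ 0 := fun h0 => by simp [h0] at hy
  have hu0 : u ≠ 0 := fun h0 => by simp [h0] at hu
  have hv0 : v ≠ 0 := fun h0 => by simp [h0] at hv
  by_cases hs : x + y = 0
  · exact Or.inr (Or.inr ⟨hs, h ▸ hs⟩)
  have hcx : (starRingEnd ℂ) x = x⁻¹ := by field_simp; linear_combination hx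
  have hcy : (starRingEnd ℂ) y = y⁻¹ := by field_simp; linear_combination hy
  have hcu : (starRingEnd ℂ) u = u⁻¹ := by field_simp; linear_combination hu
  have hcv : (starRingEnd ℂ) v = v⁻¹ := by field_simp; linear_combination hv
  have hconj := congrArg (starRingEnd ℂ) h
  rw [map_add, map_add, hcx, hcy, hcu, hcv] at hconj
  have hp : x * y = u * v := by
    have h1 : (x + y) * (u * v) = (u + v) * (x * y) := by
      field_simp at hconj
      linear_combination hconj -- may need adjustment
    rw [← h] at h1
    exact mul_left_cancel₀ hs h1.symm
  have key : (u - x) * (u - y) = 0 := by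
    have : (u - x) * (u - y) = u * u - (x + y) * u + x * y := by ring
    rw [this, h, hp]; ring
  rcases mul_eq_zero.mp key with h0 | h0
  · have hux : x = u := by linear_combination -h0
    exact Or.inl ⟨hux, by linear_combination h - hux⟩
  · have huy : y = u := by linear_combination -h0
    exact Or.inr (Or.inl ⟨by linear_combination h - huy, huy⟩)


lemma xorsh (x y H : ℕ) : (x ^^^ H) ^^^ y = (y ^^^ H) ^^^ x := by
  apply Nat.eq_of_testBit_eq
  intro j
  simp only [Nat.testBit_xor]
  rcases x.testBit j with _|_ <;> rcases y.testBit j with _|_ <;>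
    rcases H.testBit j with _|_ <;> rfl

lemma xorc (x H : ℕ) : (x ^^^ H) ^^^ x = H := by
  rw [Nat.xor_comm x H, Nat.xor_assoc, Nat.xor_self, Nat.xor_zero]

lemma psk_eq {M : ℕ} (k : ZMod M) :
    psk M k = Complex.exp ((Real.pi : ℂ) * Complex.I / M) *
      Complex.exp (2 * (Real.pi : ℂ) * Complex.I / M) ^ k.val := by
  rw [psk, ← Complex.exp_nat_mul, ← Complex.exp_add]
  congr 1
  ring

lemma zeta_unit {M : ℕ} (n : ℕ) :
    Complex.exp (2 * (Real.pi : ℂ) * Complex.I / M) ^ n *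
      (starRingEnd ℂ) (Complex.exp (2 * (Real.pi : ℂ) * Complex.I / M) ^ n) = 1 := by
  rw [← Complex.exp_nat_mul, ← Complex.exp_conj, ← Complex.exp_add]
  have hc : (starRingEnd ℂ) ((n : ℂ) * (2 * (Real.pi : ℂ) * Complex.I / (M : ℂ))) =
      -((n : ℂ) * (2 * (Real.pi : ℂ) * Complex.I / (M : ℂ))) := by
    rw [map_mul, map_div₀, map_mul, map_mul, Complex.conj_I, Complex.conj_natCast,
      Complex.conj_natCast, Complex.conj_ofReal, map_ofNat]
    ring
  rw [hc, add_neg_cancel, Complex.exp_zero]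

lemma core {lam M : ℕ} (hlam : 1 ≤ lam) (hM : M = 2 ^ lam) (a a' b b' : ZMod M)
    (h : psk M a - psk M a' = psk M b - psk M b' ∨
         psk M a - psk M a' = -(psk M b - psk M b')) :
    a.val ^^^ b.val = a'.val ^^^ b'.val := by
  have hM0 : M ≠ 0 := by rw [hM]; positivity
  haveI : NeZero M := ⟨hM0⟩
  set ζ : ℂ := Complex.exp (2 * (Real.pi : ℂ) * Complex.I / M) with hζ
  have prim : IsPrimitiveRoot ζ M := Complex.isPrimitiveRoot_exp M hM0
  have e0 : Complex.exp ((Real.pi : ℂ) * Complex.I / M) ≠ 0 := Complex.exp_ne_zero _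
  have hmod : ∀ m : ℕ, ζ ^ (m % M) = ζ ^ m := by
    intro m
    conv_rhs => rw [← Nat.mod_add_div m M]
    rw [pow_add, pow_mul, prim.pow_eq_one, one_pow, mul_one]
  have hhalf : ζ ^ (2 ^ (lam - 1)) = -1 := by
    rw [hζ, ← Complex.exp_nat_mul]
    rw [show ((2 ^ (lam - 1) : ℕ) : ℂ) * (2 * (Real.pi : ℂ) * Complex.I / M) =
        (Real.pi : ℂ) * Complex.I from ?_]
    · exact Complex.exp_pi_mul_I
    · have hMc : (M : ℂ) = ((2 ^ (lam - 1) : ℕ) : ℂ) * 2 := by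
        rw [hM]; push_cast; rw [← pow_succ]; congr 1; omega
      have h2 : ((2 ^ (lam - 1) : ℕ) : ℂ) ≠ 0 := Nat.cast_ne_zero.mpr (by positivity)
      rw [hMc]
      field_simp
  have hneg : ∀ p q : ZMod M, ζ ^ p.val = -(ζ ^ q.val) → p.val = q.val ^^^ 2 ^ (lam - 1) := by
    intro p q hpq
    have heq : ζ ^ p.val = ζ ^ ((q.val + 2 ^ (lam - 1)) % M) := by
      rw [hmod, pow_add, hhalf, hpq]; ring
    have h1 := prim.pow_inj p.val_lt (Nat.mod_lt _ (Nat.pos_of_ne_zero hM0)) heq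
    have hqlt := q.val_lt
    revert hqlt h1
    generalize q.val = qv
    intro h1 hqlt
    rw [h1, hM]
    exact natMod hlam (hM ▸ hqlt)
  have hpeq : ∀ k : ZMod M, psk M k
      = Complex.exp ((Real.pi : ℂ) * Complex.I / M) * ζ ^ k.val := fun k => psk_eq k
  rcases h with h | h
  · have key : ζ ^ a.val + ζ ^ b'.val = ζ ^ a'.val + ζ ^ b.val := by
      apply mul_left_cancel₀ e0
      rw [hpeq, hpeq, hpeq, hpeq] at h
      linear_combination h
    rcases unit_sum (zeta_unit _) (zeta_unit _) (zeta_unit _) (zeta_unit _) key with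
      ⟨h1, h2⟩ | ⟨h1, h2⟩ | ⟨h1, h2⟩
    · rw [prim.pow_inj a.val_lt a'.val_lt h1, prim.pow_inj b'.val_lt b.val_lt h2]
    · rw [prim.pow_inj a.val_lt b.val_lt h1, ← prim.pow_inj b'.val_lt a'.val_lt h2,
        Nat.xor_self, Nat.xor_comm, Nat.xor_self]
    · have ha := hneg a b' (by linear_combination h1)
      have ha' := hneg a' b (by linear_combination h2)
      rw [ha, ha', xorsh]
  · have key : ζ ^ a.val + ζ ^ b.val = ζ ^ a'.val + ζ ^ b'.val := by
      apply mul_left_cancel₀ e0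
      rw [hpeq, hpeq, hpeq, hpeq] at h
      linear_combination h
    rcases unit_sum (zeta_unit _) (zeta_unit _) (zeta_unit _) (zeta_unit _) key with
      ⟨h1, h2⟩ | ⟨h1, h2⟩ | ⟨h1, h2⟩
    · rw [prim.pow_inj a.val_lt a'.val_lt h1, prim.pow_inj b.val_lt b'.val_lt h2]
    · rw [prim.pow_inj a.val_lt b'.val_lt h1, prim.pow_inj b.val_lt a'.val_lt h2,
        Nat.xor_comm]
    · have ha := hneg a b (by linear_combination h1)
      have ha' := hneg a' b' (by linear_combination h2)
      rw [ha, ha', xorc, xorc]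

theorem xor_removes (lam : ℕ) (hlam : 1 ≤ lam) (M : ℕ) (hM : M = 2 ^ lam)
    (n : ℕ) (hn : 1 ≤ n) (ΔxA ΔxB : Fin n → ℂ)
    (hA : ∀ i, ΔxA i ∈ diffSet M) (hB : ∀ i, ΔxB i ∈ diffSet M)
    (hpm : ∀ i, ΔxA i = ΔxB i ∨ ΔxA i = -ΔxB i) :
    Removes ΔxA ΔxB
      (fun (a b : Fin n → ZMod M) => fun i => (((a i).val ^^^ (b i).val : ℕ) : ZMod M)) := by
  intro a a' b b' hc
  obtain ⟨c, h1, h2⟩ := hc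
  funext i
  have key : (a i).val ^^^ (b i).val = (a' i).val ^^^ (b' i).val := by
    apply core hlam hM
    rcases hpm i with hp | hp
    · left; rw [h1 i, h2 i, hp]
    · right; rw [h1 i, h2 i, hp]; ring
  simp only []
  rw [key]
end

section
/- Let λ ≥ 1 be an integer, M = 2^λ, n_A, n_B ≥ 1, T a type, Δx_A : Fin n_A → ℂ, Δx_B : Fin n_B → ℂ, and k_A : Fin n_A → ZMod M, k_B : Fin n_B → ZMod M. Suppose the map f : (Fin n_A → ZMod M) → (Fin n_B → ZMod M) → T removes the singular fade subspace [span(Δx_A, Δx_B)]^⊥. Define Δx̄_A i = exp(I·2π·(k_A i).val/M)·Δx_A i and Δx̄_B j = exp(I·2π·(k_B j).val/M)·Δx_B j, and define g by g a b = f (fun i => a i − k_A i) (fun j => b j − k_B j). Then g removes the singular fade subspace [span(Δx̄_A, Δx̄_B)]^⊥; moreover g satisfies the exclusive law if f does. -/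
lemma psk_sub_aux (M : ℕ) [NeZero M] (c k : ZMod M) :
    Complex.exp (Complex.I * 2 * (Real.pi : ℂ) * ((k.val : ℂ)) / (M : ℂ)) * psk M (c - k)
      = psk M c := by
  have hM : (M : ℂ) ≠ 0 := by exact_mod_cast (NeZero.ne M)
  unfold psk
  rw [← Complex.exp_add, Complex.exp_eq_exp_iff_exists_int]
  obtain ⟨n, hn⟩ : (M : ℤ) ∣ ((c - k).val + k.val - c.val : ℤ) := by
    have : (((c - k).val + k.val - c.val : ℤ) : ZMod M) = 0 := by
      push_cast [ZMod.natCast_val, ZMod.cast_id]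
      ring
    exact (ZMod.intCast_zmod_eq_zero_iff_dvd _ M).mp this
  refine ⟨n, ?_⟩
  have hn' : (((c - k).val : ℂ) + (k.val : ℂ) - (c.val : ℂ)) = (M : ℂ) * n := by
    exact_mod_cast hn
  set x := ((c - k).val : ℂ)
  set y := ((k.val : ℕ) : ℂ)
  set z := ((c.val : ℕ) : ℂ)
  field_simp
  linear_combination 2 * hn'

theorem isotope_shift_removes (lam : ℕ) (hlam : 1 ≤ lam) (M : ℕ) (hM : M = 2 ^ lam)
    (nA nB : ℕ) (hnA : 1 ≤ nA) (hnB : 1 ≤ nB)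
    (T : Type*) (ΔxA : Fin nA → ℂ) (ΔxB : Fin nB → ℂ)
    (kA : Fin nA → ZMod M) (kB : Fin nB → ZMod M)
    (f : (Fin nA → ZMod M) → (Fin nB → ZMod M) → T)
    (hf : Removes ΔxA ΔxB f) :
    Removes
      (fun i => Complex.exp (Complex.I * 2 * (Real.pi : ℂ) * ((kA i).val : ℂ) / (M : ℂ)) * ΔxA i)
      (fun j => Complex.exp (Complex.I * 2 * (Real.pi : ℂ) * ((kB j).val : ℂ) / (M : ℂ)) * ΔxB j)
      (fun (a : Fin nA → ZMod M) (b : Fin nB → ZMod M) =>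
        f (fun i => a i - kA i) (fun j => b j - kB j)) ∧
    (ExclusiveLaw f →
      ExclusiveLaw (fun (a : Fin nA → ZMod M) (b : Fin nB → ZMod M) =>
        f (fun i => a i - kA i) (fun j => b j - kB j))) := by
  have : NeZero M := ⟨by rw [hM]; positivity⟩
  constructor
  · intro a a' b b' ⟨c, hA, hB⟩
    apply hf
    refine ⟨c, fun i => ?_, fun j => ?_⟩
    · have h1 := psk_sub_aux M (a i) (kA i)
      have h2 := psk_sub_aux M (a' i) (kA i)
      have he : Complex.exp (Complex.I * 2 * (Real.pi : ℂ) * (((kA i).val : ℂ)) / (M : ℂ)) ≠ 0 :=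
        Complex.exp_ne_zero _
      apply mul_left_cancel₀ he
      linear_combination h1 - h2 + hA i
    · have h1 := psk_sub_aux M (b j) (kB j)
      have h2 := psk_sub_aux M (b' j) (kB j)
      have he : Complex.exp (Complex.I * 2 * (Real.pi : ℂ) * (((kB j).val : ℂ)) / (M : ℂ)) ≠ 0 :=
        Complex.exp_ne_zero _
      apply mul_left_cancel₀ he
      linear_combination h1 - h2 + hB j
  · rintro ⟨h1, h2⟩
    constructor
    · intro a a' b hne
      apply h1
      intro h
      apply hne
      funext i
      have := congrFun h i
      simpa using sub_left_injective this
    · intro a b b' hne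
      apply h2
      intro h
      apply hne
      funext j
      have := congrFun h j
      simpa using sub_left_injective this
end

section
/- Let λ ≥ 1 be an integer, M = 2^λ, and a, b ≥ 1. Let T, T̄ be types, Δx_A, Δx_B : Fin a → ℂ, Δx̄_A, Δx̄_B : Fin b → ℂ. Suppose f : (Fin a → ZMod M) → (Fin a → ZMod M) → T removes the singular fade subspace [span(Δx_A, Δx_B)]^⊥ and f̄ : (Fin b → ZMod M) → (Fin b → ZMod M) → T̄ removes the singular fade subspace [span(Δx̄_A, Δx̄_B)]^⊥. Define g : ((Fin a ⊕ Fin b) → ZMod M) → ((Fin a ⊕ Fin b) → ZMod M) → T × T̄ by g u v = (f (u ∘ Sum.inl) (v ∘ Sum.inl), f̄ (u ∘ Sum.inr) (v ∘ Sum.inr)). Then for every k ∈ ℂ, g removes the singular fade subspace [span(Sum.elim Δx_A (fun j => k·Δx̄_A j), Sum.elim Δx_B (fun j => k·Δx̄_B j))]^⊥; moreover g satisfies the exclusive law if both f and f̄ do. -/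
theorem cartesian_product_removes (lam : ℕ) (hlam : 1 ≤ lam) (M : ℕ) (hM : M = 2 ^ lam)
    (a b : ℕ) (ha : 1 ≤ a) (hb : 1 ≤ b)
    (T T' : Type*)
    (ΔxA ΔxB : Fin a → ℂ) (ΔyA ΔyB : Fin b → ℂ)
    (f : (Fin a → ZMod M) → (Fin a → ZMod M) → T)
    (f' : (Fin b → ZMod M) → (Fin b → ZMod M) → T')
    (hf : Removes ΔxA ΔxB f) (hf' : Removes ΔyA ΔyB f')
    (k : ℂ) :
    Removes (Sum.elim ΔxA (fun j => k * ΔyA j)) (Sum.elim ΔxB (fun j => k * ΔyB j))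
      (fun (u v : Fin a ⊕ Fin b → ZMod M) =>
        (f (u ∘ Sum.inl) (v ∘ Sum.inl), f' (u ∘ Sum.inr) (v ∘ Sum.inr))) ∧
    (ExclusiveLaw f → ExclusiveLaw f' →
      ExclusiveLaw (fun (u v : Fin a ⊕ Fin b → ZMod M) =>
        (f (u ∘ Sum.inl) (v ∘ Sum.inl), f' (u ∘ Sum.inr) (v ∘ Sum.inr)))) := by
  constructor
  · rintro u u' v v' ⟨c, hA, hB⟩
    have h1 : f (u ∘ Sum.inl) (v ∘ Sum.inl) = f (u' ∘ Sum.inl) (v' ∘ Sum.inl) :=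
      hf _ _ _ _ ⟨c, fun i => hA (Sum.inl i), fun j => hB (Sum.inl j)⟩
    have h2 : f' (u ∘ Sum.inr) (v ∘ Sum.inr) = f' (u' ∘ Sum.inr) (v' ∘ Sum.inr) := by
      refine hf' _ _ _ _ ⟨c * k, fun i => ?_, fun j => ?_⟩
      · have := hA (Sum.inr i); simpa [mul_assoc] using this
      · have := hB (Sum.inr j); simpa [mul_assoc] using this
    simp [h1, h2]
  · rintro ⟨hfa, hfb⟩ ⟨hfa', hfb'⟩
    constructor
    · intro u u' v huu' h
      apply huu'
      funext x
      cases x with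
      | inl i =>
        by_cases hc : u ∘ Sum.inl = u' ∘ Sum.inl
        · exact congrFun hc i
        · exact absurd (congrArg Prod.fst h) (hfa _ _ _ hc)
      | inr i =>
        by_cases hc : u ∘ Sum.inr = u' ∘ Sum.inr
        · exact congrFun hc i
        · exact absurd (congrArg Prod.snd h) (hfa' _ _ _ hc)
    · intro u v v' hvv' h
      apply hvv'
      funext x
      cases x with
      | inl i =>
        by_cases hc : v ∘ Sum.inl = v' ∘ Sum.inl
        · exact congrFun hc i
        · exact absurd (congrArg Prod.fst h) (hfb _ _ _ hc)
      | inr i =>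
        by_cases hc : v ∘ Sum.inr = v' ∘ Sum.inr
        · exact congrFun hc i
        · exact absurd (congrArg Prod.snd h) (hfb' _ _ _ hc)
end

section
/- Let λ ≥ 1 be an integer, M = 2^λ, and let R = {2·sin(kπ/M) : k ∈ ℕ, 1 ≤ k ≤ M/2} ⊆ ℝ. Define the relation ≈ on R × R by (r₁, r₂) ≈ (s₁, s₂) iff there exists a real c > 0 with (s₁, s₂) = (c·r₁, c·r₂) or (s₁, s₂) = (c·r₂, c·r₁). Then ≈ is an equivalence relation on R × R, and the number of its equivalence classes equals (M² − 2M + 8)/8. -/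
set_option maxHeartbeats 1600000

open Polynomial


open Multiset in
lemma pair2 {a b c d : ℕ} (h : ({a, b} : Multiset ℕ) = {c, d}) :
    (a = c ∧ b = d) ∨ (a = d ∧ b = c) := by
  have ha : a ∈ ({c, d} : Multiset ℕ) := by rw [← h]; simp
  simp only [Multiset.insert_eq_cons, Multiset.mem_cons, Multiset.mem_singleton] at ha
  rcases ha with rfl | rfl
  · left
    refine ⟨rfl, ?_⟩
    have := congrArg (Multiset.erase · a) h
    simpa [Multiset.insert_eq_cons] using this
  · right
    refine ⟨rfl, ?_⟩
    have h2 : ({a, b} : Multiset ℕ) = {a, c} := by rw [h, Multiset.pair_comm]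
    have := congrArg (Multiset.erase · a) h2
    simpa [Multiset.insert_eq_cons] using this

open Multiset in
lemma triple3 {a b c d e f : ℕ} (h : ({a, b, c} : Multiset ℕ) = {d, e, f}) :
    (a = d ∧ ({b, c} : Multiset ℕ) = {e, f}) ∨
    (a = e ∧ ({b, c} : Multiset ℕ) = {d, f}) ∨
    (a = f ∧ ({b, c} : Multiset ℕ) = {d, e}) := by
  have ha : a ∈ ({d, e, f} : Multiset ℕ) := by rw [← h]; simp
  simp only [Multiset.insert_eq_cons, Multiset.mem_cons, Multiset.mem_singleton] at ha
  rcases ha with rfl | rfl | rfl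
  · left
    refine ⟨rfl, ?_⟩
    have := congrArg (Multiset.erase · a) h
    simpa [Multiset.insert_eq_cons] using this
  · right; left
    refine ⟨rfl, ?_⟩
    have h2 : ({a, b, c} : Multiset ℕ) = {a, d, f} := by
      rw [h]; simp only [Multiset.insert_eq_cons]; exact Multiset.cons_swap d a _
    have := congrArg (Multiset.erase · a) h2
    simpa [Multiset.insert_eq_cons] using this
  · right; right
    refine ⟨rfl, ?_⟩
    have h2 : ({a, b, c} : Multiset ℕ) = {a, d, e} := by
      rw [h]; simp only [Multiset.insert_eq_cons, ← Multiset.cons_zero]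
      rw [Multiset.cons_swap e a, Multiset.cons_swap d a]
    have := congrArg (Multiset.erase · a) h2
    simpa [Multiset.insert_eq_cons] using this

open Multiset in
lemma quad4 {a b c d e f g h : ℕ} (hm : ({a, b, c, d} : Multiset ℕ) = {e, f, g, h}) :
    (a = e ∧ ({b, c, d} : Multiset ℕ) = {f, g, h}) ∨
    (a = f ∧ ({b, c, d} : Multiset ℕ) = {e, g, h}) ∨
    (a = g ∧ ({b, c, d} : Multiset ℕ) = {e, f, h}) ∨
    (a = h ∧ ({b, c, d} : Multiset ℕ) = {e, f, g}) := by
  have ha : a ∈ ({e, f, g, h} : Multiset ℕ) := by rw [← hm]; simp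
  simp only [Multiset.insert_eq_cons, Multiset.mem_cons, Multiset.mem_singleton] at ha
  rcases ha with rfl | rfl | rfl | rfl
  · left
    refine ⟨rfl, ?_⟩
    have := congrArg (Multiset.erase · a) hm
    simpa [Multiset.insert_eq_cons] using this
  · right; left
    refine ⟨rfl, ?_⟩
    have h2 : ({a, b, c, d} : Multiset ℕ) = {a, e, g, h} := by
      rw [hm]; simp only [Multiset.insert_eq_cons]; exact Multiset.cons_swap e a _
    have := congrArg (Multiset.erase · a) h2
    simpa [Multiset.insert_eq_cons] using this
  · right; right; left
    refine ⟨rfl, ?_⟩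
    have h2 : ({a, b, c, d} : Multiset ℕ) = {a, e, f, h} := by
      rw [hm]; simp only [Multiset.insert_eq_cons, ← Multiset.cons_zero]
      rw [Multiset.cons_swap f a, Multiset.cons_swap e a]
    have := congrArg (Multiset.erase · a) h2
    simpa [Multiset.insert_eq_cons] using this
  · right; right; right
    refine ⟨rfl, ?_⟩
    have h2 : ({a, b, c, d} : Multiset ℕ) = {a, e, f, g} := by
      rw [hm]; simp only [Multiset.insert_eq_cons, ← Multiset.cons_zero]
      rw [Multiset.cons_swap g a, Multiset.cons_swap f a, Multiset.cons_swap e a]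
    have := congrArg (Multiset.erase · a) h2
    simpa [Multiset.insert_eq_cons] using this

lemma single1 {a b : ℕ} (h : ({a} : Multiset ℕ) = {b}) : a = b := by
  simpa using h


lemma zeta_pow_sub (M : ℕ) (hM0 : 0 < M) (t : ℕ) (ht : t ≤ M) :
    Complex.exp (Real.pi * Complex.I / M) ^ t - Complex.exp (Real.pi * Complex.I / M) ^ (M - t)
      = 2 * (Real.cos (t * Real.pi / M) : ℂ) := by
  have hMC : (M : ℂ) ≠ 0 := Nat.cast_ne_zero.2 hM0.ne'
  have h1 : Complex.exp (Real.pi * Complex.I / M) ^ t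
      = Complex.exp ((t * Real.pi / M : ℝ) * Complex.I) := by
    rw [← Complex.exp_nat_mul]
    congr 1
    push_cast
    field_simp
  have h2 : Complex.exp (Real.pi * Complex.I / M) ^ (M - t)
      = - Complex.exp ((-(t * Real.pi / M) : ℝ) * Complex.I) := by
    rw [← Complex.exp_nat_mul]
    have hcast : ((M - t : ℕ) : ℂ) = (M : ℂ) - t := by
      push_cast [Nat.cast_sub ht]; ring
    rw [hcast]
    have : ((M : ℂ) - t) * (Real.pi * Complex.I / M)
        = Real.pi * Complex.I + ((-(t * Real.pi / M) : ℝ) : ℂ) * Complex.I := by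
      push_cast
      field_simp
      ring
    rw [this, Complex.exp_add, Complex.exp_pi_mul_I]
    ring
  rw [h1, h2, Complex.exp_mul_I, Complex.exp_mul_I]
  push_cast
  simp [Complex.cos_neg, Complex.sin_neg]
  ring

lemma coeff_msum (m : Multiset ℕ) (j : ℕ) :
    (m.map (fun i => (X : ℚ[X]) ^ i)).sum.coeff j = (m.count j : ℚ) := by
  induction m using Multiset.induction with
  | empty => simp
  | cons a m ih =>
      simp [Multiset.count_cons, coeff_X_pow, ih, eq_comm]
      ring

lemma keyL (lam M : ℕ) (hlam : 1 ≤ lam) (hM : M = 2 ^ lam) (p q r s : ℕ)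
    (hp : p ≤ M) (hq : q ≤ M) (hr : r ≤ M) (hs : s ≤ M)
    (heq : Real.cos (p * Real.pi / M) + Real.cos (q * Real.pi / M)
         = Real.cos (r * Real.pi / M) + Real.cos (s * Real.pi / M)) :
    ({p, q, M - r, M - s} : Multiset ℕ) = {r, s, M - p, M - q} := by
  have hM0 : 0 < M := by rw [hM]; positivity
  set ζ : ℂ := Complex.exp (Real.pi * Complex.I / M) with hζdef
  have hζ : IsPrimitiveRoot ζ (2 * M) := by
    have h := Complex.isPrimitiveRoot_exp (2 * M) (by omega)
    convert h using 2
    have h2 : ((2 * M : ℕ) : ℂ) = 2 * M := by push_cast; ring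
    rw [h2]
    have hMC : (M : ℂ) ≠ 0 := Nat.cast_ne_zero.2 hM0.ne'
    field_simp
  set A : ℚ[X] := X ^ p + X ^ q + X ^ (M - r) + X ^ (M - s) with hA
  set B : ℚ[X] := X ^ r + X ^ s + X ^ (M - p) + X ^ (M - q) with hB
  have hPζ : aeval ζ (A - B) = 0 := by
    simp only [hA, hB, map_sub, map_add, map_pow, aeval_X]
    have e1 := zeta_pow_sub M hM0 p hp
    have e2 := zeta_pow_sub M hM0 q hq
    have e3 := zeta_pow_sub M hM0 r hr
    have e4 := zeta_pow_sub M hM0 s hs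
    have heqC : (Real.cos (p * Real.pi / M) : ℂ) + (Real.cos (q * Real.pi / M) : ℂ)
        = (Real.cos (r * Real.pi / M) : ℂ) + (Real.cos (s * Real.pi / M) : ℂ) := by
      exact_mod_cast congrArg (fun x : ℝ => (x : ℂ)) heq
    rw [← hζdef] at e1 e2 e3 e4
    linear_combination e1 + e2 - e3 - e4 + 2 * heqC
  have hdvd : ((X : ℚ[X]) ^ M + 1) ∣ (A - B) := by
    have hcyc : cyclotomic (2 * M) ℚ = X ^ M + 1 := by
      have h2M : 2 * M = 2 ^ (lam + 1) := by rw [hM]; ring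
      rw [h2M, cyclotomic_prime_pow_eq_geom_sum Nat.prime_two, hM]
      simp [Finset.sum_range_succ]
      ring
    rw [← hcyc, cyclotomic_eq_minpoly_rat hζ (by omega)]
    exact minpoly.dvd ℚ ζ hPζ
  have hP0 : A - B = 0 := by
    obtain ⟨Q, hQ⟩ := hdvd
    by_cases hQ0 : Q = 0
    · rw [hQ, hQ0, mul_zero]
    · exfalso
      have hXM : ((X : ℚ[X]) ^ M + 1) ≠ 0 := by
        have := Polynomial.X_pow_add_C_ne_zero (R := ℚ) hM0 (1 : ℚ)
        simpa using this
      have bA : A.natDegree ≤ M := by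
        refine le_trans (natDegree_add_le _ _) (max_le (le_trans (natDegree_add_le _ _)
          (max_le (le_trans (natDegree_add_le _ _) (max_le ?_ ?_)) ?_)) ?_) <;>
          (simp only [natDegree_X_pow]; omega)
      have bB : B.natDegree ≤ M := by
        refine le_trans (natDegree_add_le _ _) (max_le (le_trans (natDegree_add_le _ _)
          (max_le (le_trans (natDegree_add_le _ _) (max_le ?_ ?_)) ?_)) ?_) <;>
          (simp only [natDegree_X_pow]; omega)
      have hdegP : (A - B).natDegree ≤ M := le_trans (natDegree_sub_le _ _) (max_le bA bB)
      have hdeg2 : (A - B).natDegree = M + Q.natDegree := by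
        rw [hQ, natDegree_mul hXM hQ0]
        congr 1
        have h3 := natDegree_X_pow_add_C (R := ℚ) (n := M) (r := (1:ℚ))
        simpa using h3
      have hQdeg : Q.natDegree = 0 := by omega
      have hQC : Q = C (Q.coeff 0) := eq_C_of_natDegree_eq_zero hQdeg
      have h1 : (A - B).eval 1 = 0 := by simp [hA, hB]
      rw [hQ, hQC, eval_mul, eval_add, eval_pow, eval_X, eval_one, eval_C] at h1
      norm_num at h1
      exact hQ0 (by rw [hQC, h1, map_zero])
  have hAB : A = B := sub_eq_zero.mp hP0
  have hA' : A = (({p, q, M - r, M - s} : Multiset ℕ).map (fun i => (X : ℚ[X]) ^ i)).sum := by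
    simp [hA, Multiset.insert_eq_cons]
    ring
  have hB' : B = (({r, s, M - p, M - q} : Multiset ℕ).map (fun i => (X : ℚ[X]) ^ i)).sum := by
    simp [hB, Multiset.insert_eq_cons]
    ring
  refine Multiset.ext.2 fun j => ?_
  have := congrArg (fun P : ℚ[X] => P.coeff j) (hA' ▸ hB' ▸ hAB)
  simp only [coeff_msum, Nat.cast_inj] at this
  exact this

lemma cos_nat_diff (M x y : ℕ) (d : ℕ) (hd : d = if y ≤ x then x - y else y - x) :
    Real.cos ((x : ℝ) * Real.pi / M - (y : ℝ) * Real.pi / M)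
      = Real.cos ((d : ℝ) * Real.pi / M) := by
  subst hd
  split_ifs with h
  · congr 1
    push_cast [Nat.cast_sub h]
    ring
  · have h' : x ≤ y := (not_le.mp h).le
    have hx : (x : ℝ) * Real.pi / M - (y : ℝ) * Real.pi / M
        = -(((y - x : ℕ) : ℝ) * Real.pi / M) := by
      push_cast [Nat.cast_sub h']
      ring
    rw [hx, Real.cos_neg]


lemma inj_ratio (lam M : ℕ) (hlam : 1 ≤ lam) (hM : M = 2 ^ lam)
    (a b a' b' : ℕ) (hb : 1 ≤ b) (hba : b < a) (ha : a ≤ M / 2)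
    (hb' : 1 ≤ b') (hba' : b' < a') (ha' : a' ≤ M / 2)
    (heq : Real.sin (a * Real.pi / M) * Real.sin (b' * Real.pi / M)
         = Real.sin (a' * Real.pi / M) * Real.sin (b * Real.pi / M)) :
    a = a' ∧ b = b' := by
  have hMN : M = 2 * 2 ^ (lam - 1) := by
    rw [hM]
    rcases Nat.exists_eq_add_of_le hlam with ⟨k, hk⟩
    subst hk
    have hk2 : 1 + k - 1 = k := by omega
    rw [pow_add, pow_one, hk2]
  have hMhalf : M / 2 = 2 ^ (lam - 1) := by omega
  have prodsum : ∀ x y : ℝ, 2 * (Real.sin x * Real.sin y) = Real.cos (x - y) - Real.cos (x + y) := by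
    intro x y
    rw [Real.cos_sub, Real.cos_add]
    ring
  set d1 := if b' ≤ a then a - b' else b' - a with hd1
  set d2 := if b ≤ a' then a' - b else b - a' with hd2
  have hcos1 := cos_nat_diff M a b' d1 hd1
  have hcos2 := cos_nat_diff M a' b d2 hd2
  have hsum1 : (a : ℝ) * Real.pi / M + (b' : ℝ) * Real.pi / M
      = ((a + b' : ℕ) : ℝ) * Real.pi / M := by push_cast; ring
  have hsum2 : (a' : ℝ) * Real.pi / M + (b : ℝ) * Real.pi / M
      = ((a' + b : ℕ) : ℝ) * Real.pi / M := by push_cast; ring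
  have hkey : Real.cos ((d1 : ℝ) * Real.pi / M) + Real.cos (((a' + b : ℕ) : ℝ) * Real.pi / M)
      = Real.cos ((d2 : ℝ) * Real.pi / M) + Real.cos (((a + b' : ℕ) : ℝ) * Real.pi / M) := by
    have e1 := prodsum ((a : ℝ) * Real.pi / M) ((b' : ℝ) * Real.pi / M)
    have e2 := prodsum ((a' : ℝ) * Real.pi / M) ((b : ℝ) * Real.pi / M)
    rw [hcos1, hsum1] at e1
    rw [hcos2, hsum2] at e2
    linear_combination e2 - e1 + 2 * heq
  have hd1c : a = b' + d1 ∨ b' = a + d1 := by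
    rw [hd1]; split_ifs with h
    · left; omega
    · right; omega
  have hd2c : a' = b + d2 ∨ b = a' + d2 := by
    rw [hd2]; split_ifs with h
    · left; omega
    · right; omega
  clear_value d1 d2
  have hm := keyL lam M hlam hM d1 (a' + b) d2 (a + b')
    (by omega) (by omega) (by omega) (by omega) hkey
  rcases quad4 hm with ⟨h1, hm2⟩ | ⟨h1, hm2⟩ | ⟨h1, hm2⟩ | ⟨h1, hm2⟩ <;>
    rcases triple3 hm2 with ⟨h2, hm3⟩ | ⟨h2, hm3⟩ | ⟨h2, hm3⟩ <;>
    rcases pair2 hm3 with ⟨h3, h4⟩ | ⟨h3, h4⟩ <;>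
    omega

theorem card_classes_pairs (lam : ℕ) (hlam : 1 ≤ lam) (M : ℕ) (hM : M = 2 ^ lam)
    (Rset : Set ℝ)
    (hRset : Rset = {r : ℝ | ∃ k : ℕ, 1 ≤ k ∧ k ≤ M / 2 ∧ r = 2 * Real.sin (k * Real.pi / M)})
    (rel : Rset × Rset → Rset × Rset → Prop)
    (hrel : ∀ p q : Rset × Rset, rel p q ↔ ∃ c : ℝ, 0 < c ∧
      (((q.1 : ℝ) = c * (p.1 : ℝ) ∧ (q.2 : ℝ) = c * (p.2 : ℝ)) ∨
       ((q.1 : ℝ) = c * (p.2 : ℝ) ∧ (q.2 : ℝ) = c * (p.1 : ℝ)))) :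
    Equivalence rel ∧ Nat.card (Quot rel) = (M ^ 2 - 2 * M + 8) / 8 := by
  have hMN : M = 2 * 2 ^ (lam - 1) := by
    rw [hM]
    rcases Nat.exists_eq_add_of_le hlam with ⟨k, hk⟩
    subst hk
    have hk2 : 1 + k - 1 = k := by omega
    rw [pow_add, pow_one, hk2]
  obtain ⟨N, hNdef⟩ : ∃ n, n = 2 ^ (lam - 1) := ⟨_, rfl⟩
  rw [← hNdef] at hMN
  have hN1 : 1 ≤ N := by rw [hNdef]; exact Nat.one_le_two_pow
  have hMhalf : M / 2 = N := by omega
  have hM0 : 0 < M := by omega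
  have hMR : (0:ℝ) < M := by exact_mod_cast hM0
  have hpi := Real.pi_pos
  -- sn
  set sn : ℕ → ℝ := fun k => Real.sin (k * Real.pi / M) with hsn
  have hsnpos : ∀ k : ℕ, 1 ≤ k → k ≤ N → 0 < sn k := by
    intro k h1 h2
    apply Real.sin_pos_of_pos_of_lt_pi
    · positivity
    · rw [div_lt_iff₀ hMR]
      have : (k:ℝ) < M := by exact_mod_cast (by omega : k < M)
      nlinarith
  have hsnlt : ∀ k l : ℕ, k < l → l ≤ N → sn k < sn l := by
    intro k l hkl hlN
    have hkR : (k:ℝ) ≤ N := by exact_mod_cast (by omega : k ≤ N)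
    have hlR : (l:ℝ) ≤ N := by exact_mod_cast hlN
    have h2N : (2:ℝ) * N = M := by exact_mod_cast hMN.symm
    have hbndk : (k:ℝ) * Real.pi / M ≤ Real.pi / 2 := by
      rw [div_le_div_iff₀ hMR (by norm_num : (0:ℝ) < 2)]
      nlinarith
    have hbndl : (l:ℝ) * Real.pi / M ≤ Real.pi / 2 := by
      rw [div_le_div_iff₀ hMR (by norm_num : (0:ℝ) < 2)]
      nlinarith
    apply Real.strictMonoOn_sin
    · constructor
      · have : (0:ℝ) ≤ (k:ℝ) * Real.pi / M := by positivity
        linarith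
      · exact hbndk
    · constructor
      · have : (0:ℝ) ≤ (l:ℝ) * Real.pi / M := by positivity
        linarith
      · exact hbndl
    · have hklR : (k:ℝ) < l := by exact_mod_cast hkl
      gcongr
  have hsnle : ∀ k l : ℕ, 1 ≤ k → k ≤ N → l ≤ N → sn k ≤ sn l → k ≤ l := by
    intro k l _ _ hlN' hle
    by_contra hcon
    exact absurd (hsnlt l k (by omega) (by omega)) (not_lt.mpr hle)
  have hmem : ∀ x : ℝ, x ∈ Rset ↔ ∃ k : ℕ, 1 ≤ k ∧ k ≤ N ∧ x = 2 * sn k := by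
    intro x
    rw [hRset, hMhalf]
    rfl
  have hpos : ∀ x : ℝ, x ∈ Rset → 0 < x := by
    intro x hx
    obtain ⟨k, h1, h2, rfl⟩ := (hmem x).1 hx
    have := hsnpos k h1 h2
    linarith
  -- F
  set F : Rset × Rset → ℝ := fun p => max (p.1 : ℝ) (p.2 : ℝ) / min (p.1 : ℝ) (p.2 : ℝ) with hF
  have hFrel : ∀ p q : Rset × Rset, rel p q ↔ F p = F q := by
    intro p q
    have pos1 := hpos _ p.1.2
    have pos2 := hpos _ p.2.2
    have pos3 := hpos _ q.1.2
    have pos4 := hpos _ q.2.2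
    constructor
    · intro h
      obtain ⟨c, hc, hcase⟩ := (hrel p q).1 h
      rcases hcase with ⟨h1, h2⟩ | ⟨h1, h2⟩ <;>
      · rw [hF]
        simp only [h1, h2]
        rw [← mul_max_of_nonneg _ _ hc.le, ← mul_min_of_nonneg _ _ hc.le,
          mul_div_mul_left _ _ hc.ne']
        try simp [max_comm, min_comm]
    · intro h
      rw [hrel]
      have hp1 : (p.1:ℝ) ≠ 0 := pos1.ne'
      have hp2 : (p.2:ℝ) ≠ 0 := pos2.ne'
      have hq1 : (q.1:ℝ) ≠ 0 := pos3.ne'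
      have hq2 : (q.2:ℝ) ≠ 0 := pos4.ne'
      replace h : ((p.1:ℝ) ⊔ (p.2:ℝ)) / ((p.1:ℝ) ⊓ (p.2:ℝ))
          = ((q.1:ℝ) ⊔ (q.2:ℝ)) / ((q.1:ℝ) ⊓ (q.2:ℝ)) := h
      rcases le_total (p.1 : ℝ) (p.2 : ℝ) with h12 | h12 <;>
        rcases le_total (q.1 : ℝ) (q.2 : ℝ) with h34 | h34
      · rw [max_eq_right h12, min_eq_left h12, max_eq_right h34, min_eq_left h34] at h
        refine ⟨(q.1 : ℝ) / (p.1 : ℝ), by positivity, Or.inl ⟨by field_simp, ?_⟩⟩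
        field_simp at h ⊢
        nlinarith [h]
      · rw [max_eq_right h12, min_eq_left h12, max_eq_left h34, min_eq_right h34] at h
        refine ⟨(q.2 : ℝ) / (p.1 : ℝ), by positivity, Or.inr ⟨?_, by field_simp⟩⟩
        field_simp at h ⊢
        nlinarith [h]
      · rw [max_eq_left h12, min_eq_right h12, max_eq_right h34, min_eq_left h34] at h
        refine ⟨(q.1 : ℝ) / (p.2 : ℝ), by positivity, Or.inr ⟨by field_simp, ?_⟩⟩
        field_simp at h ⊢
        nlinarith [h]
      · rw [max_eq_left h12, min_eq_right h12, max_eq_left h34, min_eq_right h34] at h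
        refine ⟨(q.2 : ℝ) / (p.2 : ℝ), by positivity, Or.inl ⟨?_, by field_simp⟩⟩
        field_simp at h ⊢
        nlinarith [h]
  have hequiv : Equivalence rel := by
    constructor
    · intro p
      exact (hFrel p p).2 rfl
    · intro p q h
      exact (hFrel q p).2 ((hFrel p q).1 h).symm
    · intro p q r h1 h2
      exact (hFrel p r).2 (((hFrel p q).1 h1).trans ((hFrel q r).1 h2))
  refine ⟨hequiv, ?_⟩
  set Φ : Quot rel → ℝ := Quot.lift F (fun p q h => (hFrel p q).1 h) with hΦ
  have hΦinj : Function.Injective Φ := by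
    intro x y
    induction x using Quot.ind with
    | _ p =>
    induction y using Quot.ind with
    | _ q =>
    intro h
    exact Quot.sound ((hFrel p q).2 h)
  have hcard1 : Nat.card (Quot rel) = Nat.card (Set.range Φ) :=
    (Nat.card_range_of_injective hΦinj).symm
  have hrange : Set.range Φ = Set.range F := by
    ext y
    constructor
    · rintro ⟨x, rfl⟩
      obtain ⟨p, rfl⟩ := Quot.exists_rep x
      exact ⟨p, rfl⟩
    · rintro ⟨p, rfl⟩
      exact ⟨Quot.mk rel p, rfl⟩
  set S : Set (ℕ × ℕ) := {ab | 1 ≤ ab.2 ∧ ab.2 < ab.1 ∧ ab.1 ≤ N} with hS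
  set T' : Set ℝ := (fun ab : ℕ × ℕ => sn ab.1 / sn ab.2) '' S with hT'
  have haux : ∀ a b : ℕ, 1 ≤ b → b ≤ a → a ≤ N →
      ((2 * sn a) ⊔ (2 * sn b)) / ((2 * sn a) ⊓ (2 * sn b)) ∈ insert (1:ℝ) T' := by
    intro a b hb1 hba haN
    have hbpos := hsnpos b hb1 (le_trans hba haN)
    have hsle : sn b ≤ sn a := by
      rcases eq_or_lt_of_le hba with rfl | hlt
      · exact le_refl _
      · exact (hsnlt b a hlt haN).le
    rw [max_eq_left (by linarith), min_eq_right (by linarith),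
      mul_div_mul_left _ _ (by norm_num : (2:ℝ) ≠ 0)]
    rcases eq_or_lt_of_le hba with rfl | hlt
    · left
      exact div_self hbpos.ne'
    · right
      exact ⟨(a, b), ⟨hb1, hlt, haN⟩, rfl⟩
  have hrangeF : Set.range F = insert 1 T' := by
    apply Set.eq_of_subset_of_subset
    · rintro y ⟨p, rfl⟩
      obtain ⟨a, ha1, haN, hxa⟩ := (hmem _).1 p.1.2
      obtain ⟨b, hb1, hbN, hxb⟩ := (hmem _).1 p.2.2
      have hFp : F p = ((2 * sn a) ⊔ (2 * sn b)) / ((2 * sn a) ⊓ (2 * sn b)) := by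
        show ((p.1:ℝ) ⊔ (p.2:ℝ)) / ((p.1:ℝ) ⊓ (p.2:ℝ)) = _
        rw [hxa, hxb]
      rw [hFp]
      rcases le_total b a with hba | hab
      · exact haux a b hb1 hba haN
      · rw [sup_comm, inf_comm]
        exact haux b a ha1 hab hbN
    · intro y hy
      rcases hy with rfl | hyT
      · have hx1 : (2 * sn 1) ∈ Rset := (hmem _).2 ⟨1, le_refl 1, hN1, rfl⟩
        refine ⟨(⟨2 * sn 1, hx1⟩, ⟨2 * sn 1, hx1⟩), ?_⟩
        have hpos1 := hsnpos 1 (le_refl 1) hN1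
        show ((2 * sn 1) ⊔ (2 * sn 1)) / ((2 * sn 1) ⊓ (2 * sn 1)) = 1
        rw [max_self, min_self]
        exact div_self (by positivity)
      · obtain ⟨⟨a, b⟩, ⟨hb1, hba, haN⟩, rfl⟩ := hyT
        have hxa : (2 * sn a) ∈ Rset := (hmem _).2 ⟨a, by omega, haN, rfl⟩
        have hxb : (2 * sn b) ∈ Rset := (hmem _).2 ⟨b, hb1, by omega, rfl⟩
        refine ⟨(⟨2 * sn a, hxa⟩, ⟨2 * sn b, hxb⟩), ?_⟩
        have hbpos := hsnpos b hb1 (by omega)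
        have hlt := hsnlt b a hba haN
        show ((2 * sn a) ⊔ (2 * sn b)) / ((2 * sn a) ⊓ (2 * sn b)) = sn a / sn b
        rw [max_eq_left (by linarith), min_eq_right (by linarith),
          mul_div_mul_left _ _ (by norm_num : (2:ℝ) ≠ 0)]
  have hSfin : S.Finite := by
    apply Set.Finite.subset (Set.finite_Icc ((1,1) : ℕ × ℕ) ((N,N) : ℕ × ℕ))
    rintro ⟨a, b⟩ ⟨h1, h2, h3⟩
    simp only [Set.mem_Icc, Prod.mk_le_mk]
    omega
  have hT'fin : T'.Finite := hSfin.image _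
  have h1T : (1:ℝ) ∉ T' := by
    rintro ⟨⟨a, b⟩, ⟨hb1, hba, haN⟩, habs⟩
    have hbpos := hsnpos b hb1 (by omega)
    have hlt := hsnlt b a hba haN
    have : 1 < sn a / sn b := (one_lt_div hbpos).2 hlt
    simp only at habs
    linarith [habs, this]
  have hinjOn : Set.InjOn (fun ab : ℕ × ℕ => sn ab.1 / sn ab.2) S := by
    rintro ⟨a, b⟩ ⟨hb1, hba, haN⟩ ⟨a', b'⟩ ⟨hb1', hba', haN'⟩ heq'
    simp only at heq'
    have hbpos := hsnpos b hb1 (by omega)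
    have hbpos' := hsnpos b' hb1' (by omega)
    rw [div_eq_div_iff hbpos.ne' hbpos'.ne'] at heq'
    have := inj_ratio lam M hlam hM a b a' b' hb1 hba (by omega) hb1' hba' (by omega) heq'
    exact Prod.ext this.1 this.2
  set Sfin : Finset (ℕ × ℕ) :=
    (Finset.Icc 1 N ×ˢ Finset.Icc 1 N).filter (fun ab => ab.2 < ab.1) with hSfin'
  have hScoe : S = ↑Sfin := by
    ext ⟨a, b⟩
    simp only [hS, Set.mem_setOf_eq, hSfin', Finset.coe_filter, Finset.mem_product,
      Finset.mem_Icc, Set.mem_setOf_eq]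
    omega
  have hSfincard : Sfin.card = N * (N - 1) / 2 := by
    have hbij : Sfin.card = ((Finset.range N).sigma (fun i => Finset.range i)).card := by
      apply Finset.card_bij' (fun ab _ => (⟨ab.1 - 1, ab.2 - 1⟩ : Σ _ : ℕ, ℕ))
        (fun x _ => ((x.1 + 1, x.2 + 1) : ℕ × ℕ))
      · rintro ⟨a, b⟩ hab
        simp only [hSfin', Finset.mem_filter, Finset.mem_product, Finset.mem_Icc] at hab
        simp only [Finset.mem_sigma, Finset.mem_range]
        omega
      · rintro ⟨i, j⟩ hx
        simp only [Finset.mem_sigma, Finset.mem_range] at hx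
        simp only [hSfin', Finset.mem_filter, Finset.mem_product, Finset.mem_Icc]
        omega
      · rintro ⟨a, b⟩ hab
        simp only [hSfin', Finset.mem_filter, Finset.mem_product, Finset.mem_Icc] at hab
        simp only [Prod.mk.injEq]
        omega
      · rintro ⟨i, j⟩ hx
        simp only [Finset.mem_sigma, Finset.mem_range] at hx
        simp only [Sigma.mk.inj_iff, heq_eq_eq]
        omega
    rw [hbij, Finset.card_sigma]
    simp only [Finset.card_range]
    exact Finset.sum_range_id N
  have hcount : Nat.card (Quot rel) = N * (N - 1) / 2 + 1 := by
    rw [hcard1, hrange, hrangeF, Nat.card_coe_set_eq,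
      Set.ncard_insert_of_notMem h1T hT'fin, hT', Set.ncard_image_of_injOn hinjOn,
      hScoe, Set.ncard_coe_finset, hSfincard]
  rw [hcount]
  have e1 : M ^ 2 = 4 * (N * N) := by rw [hMN]; ring
  have e2 : N ≤ N * N := by nlinarith [hN1]
  have e3 : N * (N - 1) = N * N - N := by
    have := Nat.mul_pred N N
    simpa using this
  have e4 : 2 ∣ N * (N - 1) := by
    obtain ⟨k, hk⟩ := Nat.even_mul_succ_self (N - 1)
    have h5 : (N - 1) * (N - 1 + 1) = N * (N - 1) := by
      have hN' : N - 1 + 1 = N := by omega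
      rw [hN']
      ring
    exact ⟨k, by omega⟩
  omega
end
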